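/- Every coloured k-clique K with k ≥ 3 has energy δ(K) = m + 2 − k; that is, the minimum over all cyclic orderings x_1, …, x_k of the vertex set of the weight Σ_{i=1}^{k} c_{x_i x_{i+1}} (indices modulo k) equals m + 2 − k. -/

import Mathlib

namespace MutClassAn

open Finset

variable {V : Type} [Fintype V] [DecidableEq V]

/-- `M i j c` is the number of arrows from `i` to `j` of colour `c`.
An `m`-coloured quiver has no loops, is monochromatic and skew-symmetric
(`c.rev = m - c` in `Fin (m+1)`). -/
def IsColouredQuiver {m : ℕ} (M : V → V → Fin (m + 1) → ℕ) : Prop :=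
  (∀ i c, M i i c = 0) ∧
  (∀ i j c c', M i j c ≠ 0 → M i j c' ≠ 0 → c = c') ∧
  (∀ i j c, M i j c = M j i c.rev)

/-- A coloured quiver is simple if there is at most one arrow between any two
vertices in each direction. -/
def IsSimpleCQ {m : ℕ} (M : V → V → Fin (m + 1) → ℕ) : Prop :=
  ∀ i j : V, (∑ c, M i j c) ≤ 1

/-- Adjacency in the underlying graph. -/
def CQAdj {m : ℕ} (M : V → V → Fin (m + 1) → ℕ) (i j : V) : Prop :=
  i ≠ j ∧ ∃ c, M i j c ≠ 0

/-- The colour of the (unique, for simple quivers) arrow from `i` to `j`. -/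
def colourOf {m : ℕ} (M : V → V → Fin (m + 1) → ℕ) (i j : V) : ℕ :=
  ∑ c : Fin (m + 1), M i j c * c.val

/-- Buan–Thomas coloured quiver mutation at the vertex `j`. -/
def mutate {m : ℕ} (M : V → V → Fin (m + 1) → ℕ) (j : V) :
    V → V → Fin (m + 1) → ℕ := fun i k c =>
  if k = j then M i k (c + 1)
  else if i = j then M i k (c - 1)
  else ((M i k c : ℤ) - ∑ t ∈ Finset.univ.filter (fun t => t ≠ c), (M i k t : ℤ)
      + ((M i j c : ℤ) - (M i j (c - 1) : ℤ)) * (M j k 0 : ℤ)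
      + (M i j (Fin.last m) : ℤ) * ((M j k c : ℤ) - (M j k (c + 1) : ℤ))).toNat

/-- Mutation equivalence: the equivalence relation generated by single mutations. -/
def MutEquiv {m : ℕ} (M M' : V → V → Fin (m + 1) → ℕ) : Prop :=
  Relation.EqvGen (fun A B => ∃ v, mutate A v = B) M M'

/-- A hole is an induced cycle of length at least `4` in the underlying graph. -/
def HasHole {m : ℕ} (M : V → V → Fin (m + 1) → ℕ) : Prop :=
  ∃ k : ℕ, 4 ≤ k ∧ ∃ x : ZMod k → V, Function.Injective x ∧
    (∀ i, CQAdj M (x i) (x (i + 1))) ∧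
    ∀ i j : ZMod k, i ≠ j → j ≠ i + 1 → i ≠ j + 1 → ¬ CQAdj M (x i) (x j)

/-- A clique: a set of pairwise adjacent vertices. -/
def IsCliqueCQ {m : ℕ} (M : V → V → Fin (m + 1) → ℕ) (S : Set V) : Prop :=
  S.Pairwise (CQAdj M)

/-- The set of neighbours of a vertex. -/
def nbrs {m : ℕ} (M : V → V → Fin (m + 1) → ℕ) (v : V) : Set V :=
  {u | CQAdj M v u}

/-- Connectedness of the underlying graph. -/
def CQConnected {m : ℕ} (M : V → V → Fin (m + 1) → ℕ) : Prop :=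
  ∀ u w : V, Relation.ReflTransGen (CQAdj M) u w

/-- Condition (1) of the class `𝒬ₙᵐ`: the neighbourhood of every vertex is covered
by two cliques of sizes `r, k ≤ m + 2` with `r + k = z + 2`, with no arrows between
the two cliques away from the vertex. -/
def Cond1 {m : ℕ} (M : V → V → Fin (m + 1) → ℕ) : Prop :=
  ∀ v : V, (nbrs M v).Nonempty →
    ∃ R K : Finset V, v ∈ R ∧ v ∈ K ∧ IsCliqueCQ M ↑R ∧ IsCliqueCQ M ↑K ∧
      R.card + K.card = (nbrs M v).ncard + 2 ∧ R.card ≤ m + 2 ∧ K.card ≤ m + 2 ∧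
      (∀ u ∈ nbrs M v, u ∈ R ∨ u ∈ K) ∧
      ∀ a ∈ R, a ≠ v → ∀ b ∈ K, b ≠ v → ¬ CQAdj M a b

/-- Condition (2) of the class `𝒬ₙᵐ`: every triangle inside a clique has colour
sum `m - 1` along one of its two orientations (sums taken in `ℤ`). -/
def Cond2 {m : ℕ} (M : V → V → Fin (m + 1) → ℕ) : Prop :=
  ∀ v1 v2 v3 : V, v1 ≠ v2 → v2 ≠ v3 → v1 ≠ v3 →
    CQAdj M v1 v2 → CQAdj M v2 v3 → CQAdj M v1 v3 →
    ((colourOf M v2 v1 : ℤ) + (colourOf M v1 v3 : ℤ) + (colourOf M v3 v2 : ℤ)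
        = (m : ℤ) - 1 ∨
      ((m : ℤ) - colourOf M v2 v1) + ((m : ℤ) - colourOf M v1 v3)
          + ((m : ℤ) - colourOf M v3 v2) = (m : ℤ) - 1)

/-- Membership in the class `𝒬ₙᵐ` (`n` being the cardinality of the vertex set). -/
def MemQClass {m : ℕ} (M : V → V → Fin (m + 1) → ℕ) : Prop :=
  IsColouredQuiver M ∧ IsSimpleCQ M ∧ CQConnected M ∧ ¬ HasHole M ∧ Cond1 M ∧ Cond2 M

/-- An `Aₙ`-quiver: the underlying graph is the path graph on the vertex set. -/
def IsAnQuiver {m : ℕ} (M : V → V → Fin (m + 1) → ℕ) : Prop :=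
  ∃ e : Fin (Fintype.card V) ≃ V,
    ∀ i j : Fin (Fintype.card V),
      CQAdj M (e i) (e j) ↔ (i.val + 1 = j.val ∨ j.val + 1 = i.val)

/-- The coloured quiver on `Fin n` whose underlying graph is the path
`0 — 1 — ⋯ — (n-1)`, with the arrow `j+1 → j` coloured `c j` and the arrow
`j → j+1` coloured `m - c j`. -/
def pathQuiver (m n : ℕ) (c : ℕ → Fin (m + 1)) :
    Fin n → Fin n → Fin (m + 1) → ℕ := fun i j d =>
  if j.val + 1 = i.val ∧ d = c j.val then 1
  else if i.val + 1 = j.val ∧ d = (c i.val).rev then 1 else 0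

/-- Delete all arrows between vertices of `S`. -/
def deleteArrows {m : ℕ} (M : V → V → Fin (m + 1) → ℕ) (S : Finset V) :
    V → V → Fin (m + 1) → ℕ := fun i j c =>
  if i ∈ S ∧ j ∈ S then 0 else M i j c

/-- The connected component of `u` is an `A_k`-quiver (a path) for some `k ≥ 1`. -/
def ComponentIsPath {m : ℕ} (M : V → V → Fin (m + 1) → ℕ) (u : V) : Prop :=
  ∃ (k : ℕ) (x : Fin k → V), 1 ≤ k ∧ Function.Injective x ∧
    Set.range x = {w | Relation.ReflTransGen (CQAdj M) u w} ∧
    ∀ i j : Fin k, CQAdj M (x i) (x j) ↔ (i.val + 1 = j.val ∨ j.val + 1 = i.val)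

/-- An almost extremal clique: deleting its arrows leaves a connected component
which is an `A_k`-quiver for some `k ≥ 1`. -/
def AlmostExtremalClique {m : ℕ} (M : V → V → Fin (m + 1) → ℕ) (S : Finset V) : Prop :=
  IsCliqueCQ M ↑S ∧ ∃ u : V, ComponentIsPath (deleteArrows M S) u

/-- An extremal clique: deleting its arrows leaves a single-vertex component. -/
def ExtremalClique {m : ℕ} (M : V → V → Fin (m + 1) → ℕ) (S : Finset V) : Prop :=
  IsCliqueCQ M ↑S ∧
    ∃ u : V, {w | Relation.ReflTransGen (CQAdj (deleteArrows M S)) u w} = {u}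

/-- A coloured clique structure on a vertex type: colours `c i j ∈ {0,…,m}` with
skew-symmetry `c j i = m - c i j` and the triangle condition. -/
def IsCliqueColouring (m : ℕ) {W : Type} (c : W → W → ℕ) : Prop :=
  (∀ i j : W, i ≠ j → c i j ≤ m) ∧
  (∀ i j : W, i ≠ j → c i j + c j i = m) ∧
  ∀ i j l : W, i ≠ j → j ≠ l → i ≠ l →
    ((c i j : ℤ) + (c j l : ℤ) + (c l i : ℤ) = (m : ℤ) - 1 ∨
      (c i j : ℤ) + (c j l : ℤ) + (c l i : ℤ) = 2 * (m : ℤ) + 1)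

/-- Cyclic successor in `Fin k`. -/
def cyc {k : ℕ} (i : Fin k) : Fin k :=
  ⟨(i.val + 1) % k, Nat.mod_lt _ i.pos⟩

/-- The weight of the Hamiltonian cycle `x 0 → x 1 → ⋯ → x (k-1) → x 0`:
the sum of the colours of its arrows. -/
def cycleWeight {W : Type} (c : W → W → ℕ) {k : ℕ} (x : Fin k → W) : ℤ :=
  ∑ i : Fin k, (c (x i) (x (cyc i)) : ℤ)

/-- The Hamiltonian cycle on `k+1` vertices obtained from the cycle
`x 0 → ⋯ → x (k-1) → x 0` by inserting the vertex `x (Fin.last k)`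
immediately after `x j`. -/
def insertAfter {W : Type} {k : ℕ} (x : Fin (k + 1) → W) (j : Fin k) :
    Fin (k + 1) → W := fun i =>
  if i = 0 then x (Fin.last k)
  else x (Fin.castSucc ⟨(j.val + i.val) % k, Nat.mod_lt _ j.pos⟩)


private lemma dvd_zero_of_bounds {M a : ℤ} (h : M ∣ a) (h1 : -M < a) (h2 : a < M) : a = 0 := by
  obtain ⟨q, rfl⟩ := h
  have hM : 0 < M := by linarith
  have hq1 : q < 1 := lt_of_mul_lt_mul_left (by rw [mul_one]; exact h2) hM.le
  have hq2 : -q < 1 := lt_of_mul_lt_mul_left (by rw [mul_neg, mul_one]; omega) hM.le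
  have : q = 0 := by omega
  simp [this]

private lemma dvd_eq_of_bounds {M a : ℤ} (h : M ∣ a) (h1 : 0 < a) (h2 : a < 2 * M) : a = M := by
  obtain ⟨q, rfl⟩ := h
  have hM : 0 < M := by linarith
  have hq1 : q < 2 := lt_of_mul_lt_mul_left (by omega) hM.le
  have hq2 : 0 < q := lt_of_mul_lt_mul_left (by omega : M * 0 < M * q) hM.le
  have : q = 1 := by omega
  simp [this]

/-- Every coloured `k`-clique (`k ≥ 3`) has energy `m + 2 - k`: some Hamiltonian
cycle has weight `m + 2 - k`, and every Hamiltonian cycle has weight at least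
`m + 2 - k`. -/
theorem energy_clique (m k : ℕ) (hm : 1 ≤ m) (hk : 3 ≤ k)
    (W : Type) [Fintype W] (hcard : Fintype.card W = k)
    (c : W → W → ℕ) (hc : IsCliqueColouring m c) :
    (∃ x : Fin k → W, Function.Bijective x ∧
        cycleWeight c x = (m : ℤ) + 2 - k) ∧
    (∀ x : Fin k → W, Function.Bijective x →
        (m : ℤ) + 2 - k ≤ cycleWeight c x) := by
  classical
  obtain ⟨hle, hskew, htri⟩ := hc
  have hW : Nonempty W := by
    rw [← Fintype.card_pos_iff, hcard]; omega
  obtain ⟨o⟩ := hW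
  -- the potential function
  set g : W → ℕ := fun i => if i = o then 0 else c o i + 1 with hgdef
  have hgle : ∀ i, g i ≤ m + 1 := by
    intro i
    simp only [hgdef]
    split
    · omega
    · rename_i h
      have := hle o i (Ne.symm h)
      omega
  have hgo : g o = 0 := by simp [hgdef]
  have hgne : ∀ i, i ≠ o → g i = c o i + 1 := by
    intro i h; simp [hgdef, h]
  have hcong : ∀ i j : W, i ≠ j →
      ((m : ℤ) + 2) ∣ ((g j : ℤ) - g i - c i j - 1) := by
    intro i j hij
    by_cases hio : i = o
    · subst hio
      rw [hgo, hgne j (Ne.symm hij)]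
      refine ⟨0, by push_cast; ring⟩
    · by_cases hjo : j = o
      · rw [hjo, hgo, hgne i hio]
        have hs := hskew i o hio
        refine ⟨-1, by push_cast; omega⟩
      · rw [hgne i hio, hgne j hjo]
        have hs := hskew j o hjo
        have ht := htri i j o hij hjo hio
        rcases ht with ht | ht
        · refine ⟨0, by push_cast at *; omega⟩
        · refine ⟨-1, by push_cast at *; omega⟩
  have hginj : Function.Injective g := by
    intro i j hgij
    by_contra hij
    have hd := hcong i j hij
    rw [hgij] at hd
    have h1 : ((m : ℤ) + 2) ∣ ((c i j : ℤ) + 1) := by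
      rw [show ((c i j : ℤ) + 1) = -((g j : ℤ) - g j - c i j - 1) by ring, dvd_neg]
      exact hd
    have h2 := Int.le_of_dvd (by positivity) h1
    have h3 := hle i j hij
    push_cast at h2
    omega
  -- colour determined by potential
  have hlt : ∀ i j : W, i ≠ j → g i < g j →
      (c i j : ℤ) + 1 = (g j : ℤ) - g i := by
    intro i j hij h
    have hd := hcong i j hij
    have h0 : ((g j : ℤ) - g i - c i j - 1) = 0 := by
      refine dvd_zero_of_bounds hd ?_ ?_
      · have := hle i j hij
        have := hgle j
        omega
      · have := hgle j
        omega
    linarith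
  have hgt : ∀ i j : W, i ≠ j → g j < g i →
      (c i j : ℤ) + 1 = (g j : ℤ) - g i + ((m : ℤ) + 2) := by
    intro i j hij h
    have hd : ((m : ℤ) + 2) ∣ ((c i j : ℤ) + 1 - ((g j : ℤ) - g i)) := by
      rw [show (c i j : ℤ) + 1 - ((g j : ℤ) - g i) = -((g j : ℤ) - g i - c i j - 1) by ring, dvd_neg]
      exact hcong i j hij
    have h0 : (c i j : ℤ) + 1 - ((g j : ℤ) - g i) = (m : ℤ) + 2 := by
      refine dvd_eq_of_bounds hd ?_ ?_
      · omega
      · have := hle i j hij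
        have := hgle i
        omega
    linarith
  -- facts about cyc
  haveI : NeZero k := ⟨by omega⟩
  have hcyc1 : ∀ i : Fin k, cyc i = i + 1 := by
    intro i
    ext
    simp only [cyc, Fin.add_def, Fin.val_one' k]
    rw [Nat.mod_eq_of_lt (show 1 < k by omega)]
  have hbijcyc : Function.Bijective (cyc : Fin k → Fin k) := by
    have : (cyc : Fin k → Fin k) = fun i => i + 1 := funext hcyc1
    rw [this]
    exact (Equiv.addRight (1 : Fin k)).bijective
  have hnecyc : ∀ i : Fin k, i ≠ cyc i := by
    intro i h
    have hv := congrArg Fin.val h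
    simp only [cyc] at hv
    have hi := i.isLt
    rcases Nat.lt_or_ge (i.val + 1) k with h1 | h1
    · rw [Nat.mod_eq_of_lt h1] at hv; omega
    · have h2 : i.val + 1 = k := by omega
      rw [h2, Nat.mod_self] at hv
      omega
  have hsum0 : ∀ x : Fin k → W,
      ∑ i : Fin k, (((g (x (cyc i)) : ℤ) - g (x i))) = 0 := by
    intro x
    rw [Finset.sum_sub_distrib]
    rw [Fintype.sum_bijective cyc hbijcyc (fun i => (g (x (cyc i)) : ℤ))
      (fun i => (g (x i) : ℤ)) (fun i => rfl)]
    ring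
  have hplusk : ∀ x : Fin k → W, cycleWeight c x + k =
      ∑ i : Fin k, ((c (x i) (x (cyc i)) : ℤ) + 1) := by
    intro x
    rw [Finset.sum_add_distrib]
    simp [cycleWeight]
  constructor
  · -- existence: sort by g
    letI : LinearOrder W := LinearOrder.lift' g hginj
    have hltW : ∀ a b : W, a < b ↔ g a < g b := fun a b => Iff.rfl
    let e := monoEquivOfFin W hcard
    refine ⟨⇑e, e.toEquiv.bijective, ?_⟩
    have hmono : ∀ i j : Fin k, i < j → g (e i) < g (e j) := by
      intro i j h
      exact (hltW _ _).mp (e.strictMono h)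
    have hinje : Function.Injective ⇑e := e.toEquiv.injective
    set lastI : Fin k := ⟨k - 1, by omega⟩ with hlastI
    have hterm : ∀ i : Fin k, (c (e i) (e (cyc i)) : ℤ) + 1 =
        (if i = lastI then (m : ℤ) + 2 else 0) + ((g (e (cyc i)) : ℤ) - g (e i)) := by
      intro i
      by_cases h : i = lastI
      · subst h
        have hcv : cyc lastI < lastI := by
          rw [Fin.lt_def]
          simp only [cyc, hlastI]
          have h2 : k - 1 + 1 = k := by omega
          rw [h2, Nat.mod_self]
          omega
        have hne : lastI ≠ cyc lastI := (ne_of_lt hcv).symm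
        have hnee : e lastI ≠ e (cyc lastI) := fun h => hne (hinje h)
        have hg := hmono _ _ hcv
        rw [if_pos rfl, hgt (e lastI) (e (cyc lastI)) hnee hg]
        ring
      · have hiv : i.val + 1 < k := by
          have := i.isLt
          have : i.val ≠ k - 1 := fun hh => h (by ext; simp [hlastI, hh])
          omega
        have hcv : i < cyc i := by
          rw [Fin.lt_def]
          simp only [cyc]
          rw [Nat.mod_eq_of_lt hiv]
          omega
        have hne : i ≠ cyc i := ne_of_lt hcv
        have hnee : e i ≠ e (cyc i) := fun h => hne (hinje h)
        have hg := hmono _ _ hcv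
        rw [if_neg h, hlt (e i) (e (cyc i)) hnee hg]
        ring
    have : cycleWeight c ⇑e + k = (m : ℤ) + 2 := by
      rw [hplusk ⇑e]
      calc ∑ i : Fin k, ((c (e i) (e (cyc i)) : ℤ) + 1)
          = ∑ i : Fin k, ((if i = lastI then (m : ℤ) + 2 else 0) +
              ((g (e (cyc i)) : ℤ) - g (e i))) := Finset.sum_congr rfl (fun i _ => hterm i)
        _ = (∑ i : Fin k, if i = lastI then (m : ℤ) + 2 else 0) +
              ∑ i : Fin k, ((g (e (cyc i)) : ℤ) - g (e i)) := Finset.sum_add_distrib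
        _ = (m : ℤ) + 2 := by
              rw [hsum0 ⇑e, Finset.sum_ite_eq' Finset.univ lastI (fun _ => (m : ℤ) + 2)]
              simp
    linarith
  · -- lower bound
    intro x hx
    have hT : ((m : ℤ) + 2) ∣ (cycleWeight c x + k) := by
      rw [hplusk x]
      have : ∑ i : Fin k, ((c (x i) (x (cyc i)) : ℤ) + 1) =
          (∑ i : Fin k, ((c (x i) (x (cyc i)) : ℤ) + 1 - ((g (x (cyc i)) : ℤ) - g (x i)))) +
          ∑ i : Fin k, ((g (x (cyc i)) : ℤ) - g (x i)) := by
        rw [← Finset.sum_add_distrib]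
        exact Finset.sum_congr rfl (fun i _ => by ring)
      rw [this, hsum0 x, add_zero]
      refine Finset.dvd_sum (fun i _ => ?_)
      have hne : x i ≠ x (cyc i) := fun h => hnecyc i (hx.injective h)
      rw [show (c (x i) (x (cyc i)) : ℤ) + 1 - ((g (x (cyc i)) : ℤ) - g (x i)) = -((g (x (cyc i)) : ℤ) - g (x i) - c (x i) (x (cyc i)) - 1) by ring, dvd_neg]
      exact hcong (x i) (x (cyc i)) hne
    have hpos : (0 : ℤ) < cycleWeight c x + k := by
      have h0 : (0 : ℤ) ≤ cycleWeight c x :=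
        Finset.sum_nonneg (fun i _ => by positivity)
      have : (0 : ℤ) < k := by exact_mod_cast (by omega : 0 < k)
      linarith
    have := Int.le_of_dvd hpos hT
    linarith


end MutClassAn
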